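/- Let X be a measurable space, m ≥ 1, μ a probability measure on X × Fin m, and l_p ∈ Fin m with μ{p : p.2 ≠ l_p} > 0. Let k, N be natural numbers with 1 ≤ k ≤ N. On Ω := Fin N → (X × Fin m) equip the product probability measure ℙ := μ^{⊗N}, and let A := {ω ∈ Ω : the set {i : (ω i).2 ≠ l_p} has at least k elements}. Define S : Ω → (Fin k → X × Fin m) by S(ω)(j) := ω(i_j(ω)), where i_1(ω) < i_2(ω) < ⋯ < i_k(ω) are the k smallest elements of {i : (ω i).2 ≠ l_p} whenever this set has at least k elements (and S is given an arbitrary fixed measurable definition elsewhere). Then the pushforward of the conditional measure ℙ[·|A] under S equals the k-fold product measure (μ[·|{p : p.2 ≠ l_p}])^{⊗k}. -/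

import Mathlib

open MeasureTheory ProbabilityTheory

namespace SubsampleAux

variable {α : Type*} {k N : ℕ}

open Classical in
/-- Coordinate-wise description of the event "the `k` smallest bad indices are exactly
`t 0 < t 1 < ⋯ < t (k-1)` and the sample at `t j` lies in `s j`". -/
noncomputable def Fset (B : Set α) (s : Fin k → Set α) (t : Fin k → Fin N) (i : Fin N) :
    Set α :=
  if h : ∃ j, t j = i then s h.choose ∩ B
  else if ∃ j, i < t j then Bᶜ else Set.univ

lemma Fset_apply (B : Set α) (s : Fin k → Set α) {t : Fin k → Fin N}
    (ht : Function.Injective t) (j : Fin k) : Fset B s t (t j) = s j ∩ B := by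
  have h : ∃ j', t j' = t j := ⟨j, rfl⟩
  rw [Fset, dif_pos h, ht h.choose_spec]

lemma Fset_not_range (B : Set α) (s : Fin k → Set α) {t : Fin k → Fin N} {i : Fin N}
    (h : ¬ ∃ j, t j = i) :
    Fset B s t i = if ∃ j, i < t j then Bᶜ else Set.univ := by
  rw [Fset, dif_neg h]

lemma measurableSet_Fset [MeasurableSpace α] {B : Set α} (hBm : MeasurableSet B)
    {s : Fin k → Set α} (hs : ∀ j, MeasurableSet (s j)) (t : Fin k → Fin N) (i : Fin N) :
    MeasurableSet (Fset B s t i) := by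
  rw [Fset]
  split_ifs
  · exact (hs _).inter hBm
  · exact hBm.compl
  · exact MeasurableSet.univ

lemma mem_pi_Fset {B : Set α} {s : Fin k → Set α} {t : Fin k → Fin N}
    (ht : Function.Injective t) {ω : Fin N → α} :
    ω ∈ Set.pi Set.univ (Fset B s t) ↔
      (∀ j, ω (t j) ∈ s j ∧ ω (t j) ∈ B) ∧
      ∀ i : Fin N, (∀ j, t j ≠ i) → (∃ j, i < t j) → ω i ∉ B := by
  constructor
  · intro hω
    refine ⟨fun j => ?_, fun i hi hlt => ?_⟩
    · have h := hω (t j) (Set.mem_univ _)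
      rw [Fset_apply B s ht j] at h
      exact h
    · have h := hω i (Set.mem_univ _)
      rw [Fset_not_range B s (by push_neg; exact hi), if_pos hlt] at h
      exact h
  · rintro ⟨h1, h2⟩ i _
    by_cases h : ∃ j, t j = i
    · obtain ⟨j, rfl⟩ := h
      rw [Fset_apply B s ht j]; exact h1 j
    · rw [Fset_not_range B s h]
      split_ifs with hlt
      · exact h2 i (by push_neg at h; exact h) hlt
      · trivial

end SubsampleAux

open SubsampleAux

/-- The i.i.d.-subsample lemma: for `N` i.i.d. samples from a probability measure `μ` on
`X × Fin m`, conditionally on there being at least `k` samples with label different from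
`l_p`, the first `k` such samples (i.e. the samples at the `k` smallest indices `i` with
`(ω i).2 ≠ l_p`, picked out by `idx`) are distributed as `k` i.i.d. draws from `μ`
conditioned on the label being different from `l_p`. -/
theorem subsample_first_k_ne_label_iid
    {X : Type*} [MeasurableSpace X] {m : ℕ} (hm : 1 ≤ m)
    (μ : Measure (X × Fin m)) [IsProbabilityMeasure μ] (l_p : Fin m)
    (hpos : 0 < μ {p | p.2 ≠ l_p})
    (k N : ℕ) (hk : 1 ≤ k) (hkN : k ≤ N)
    (idx : (Fin N → X × Fin m) → Fin k → Fin N)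
    (S : (Fin N → X × Fin m) → Fin k → X × Fin m)
    (hS : Measurable S)
    (A : Set (Fin N → X × Fin m))
    (hA : A = {ω | k ≤ (Finset.univ.filter fun i => (ω i).2 ≠ l_p).card})
    -- on `A`, `idx ω` enumerates, in increasing order, the `k` smallest indices whose
    -- label differs from `l_p`
    (hidx : ∀ ω ∈ A, StrictMono (idx ω) ∧ (∀ j, (ω (idx ω j)).2 ≠ l_p) ∧
      ∀ i : Fin N, (ω i).2 ≠ l_p → i ∉ Set.range (idx ω) → ∀ j, idx ω j < i)
    (hSdef : ∀ ω ∈ A, ∀ j, S ω j = ω (idx ω j)) :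
    ((Measure.pi fun _ : Fin N => μ)[|A]).map S =
      Measure.pi fun _ : Fin k => μ[|{p | p.2 ≠ l_p}] := by
  classical
  set B : Set (X × Fin m) := {p | p.2 ≠ l_p} with hBdef
  have hBm : MeasurableSet B := (measurableSet_singleton l_p).compl.preimage measurable_snd
  set Pr : Measure (Fin N → X × Fin m) := Measure.pi fun _ : Fin N => μ with hPrdef
  set T : Finset (Fin k → Fin N) :=
    Finset.univ.filter (fun t : Fin k → Fin N => StrictMono t) with hTdef
  -- the key identification lemma
  have key : ∀ (s : Fin k → Set (X × Fin m)) (t : Fin k → Fin N), StrictMono t →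
      ∀ ω, ω ∈ Set.pi Set.univ (Fset B s t) →
        ω ∈ A ∧ idx ω = t ∧ ∀ j, S ω j ∈ s j := by
    intro s t ht ω hω
    rw [mem_pi_Fset ht.injective] at hω
    obtain ⟨h1, h2⟩ := hω
    have hωA : ω ∈ A := by
      rw [hA]
      have hsub : Finset.image t Finset.univ ⊆
          Finset.univ.filter (fun i => (ω i).2 ≠ l_p) := by
        intro i hi
        simp only [Finset.mem_image, Finset.mem_univ, true_and] at hi
        obtain ⟨j, rfl⟩ := hi
        simp only [Finset.mem_filter, Finset.mem_univ, true_and]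
        exact (h1 j).2
      calc k = (Finset.image t Finset.univ).card := by
              rw [Finset.card_image_of_injective _ ht.injective, Finset.card_univ,
                Fintype.card_fin]
        _ ≤ _ := Finset.card_le_card hsub
    obtain ⟨hmono, hbad, hmin⟩ := hidx ω hωA
    have hidxeq : ∀ n : ℕ, ∀ j : Fin k, (j : ℕ) = n → idx ω j = t j := by
      intro n
      induction n using Nat.strong_induction_on with
      | _ n IH =>
        intro j hjn
        have IH' : ∀ j' : Fin k, j' < j → idx ω j' = t j' := by
          intro j' hj'
          exact IH j' (hjn ▸ hj') j' rfl
        rcases lt_trichotomy (idx ω j) (t j) with hlt | heq | hgt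
        · exfalso
          have hbadi : (ω (idx ω j)).2 ≠ l_p := hbad j
          have hnotrange : ∀ j', t j' ≠ idx ω j := by
            intro j' hj'
            have hj'lt : j' < j := ht.lt_iff_lt.mp (hj' ▸ hlt)
            have heq2 : idx ω j' = idx ω j := (IH' j' hj'lt).trans hj'
            exact absurd (hmono.injective heq2) (ne_of_lt hj'lt)
          exact (h2 (idx ω j) hnotrange ⟨j, hlt⟩) hbadi
        · exact heq
        · exfalso
          have hbadt : (ω (t j)).2 ≠ l_p := (h1 j).2
          have hnotrange : t j ∉ Set.range (idx ω) := by
            rintro ⟨j', hj'⟩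
            have hj'lt : j' < j := hmono.lt_iff_lt.mp (hj'.symm ▸ hgt)
            have heq2 : t j' = t j := (IH' j' hj'lt).symm.trans hj'
            exact absurd (ht.injective heq2) (ne_of_lt hj'lt)
          exact absurd (hmin (t j) hbadt hnotrange j) (not_lt.mpr hgt.le)
    have hidxt : idx ω = t := funext fun j => hidxeq j j rfl
    refine ⟨hωA, hidxt, fun j => ?_⟩
    rw [hSdef ω hωA j, hidxt]
    exact (h1 j).1
  -- decomposition of the event
  have hdecomp : ∀ s : Fin k → Set (X × Fin m),
      A ∩ S ⁻¹' (Set.pi Set.univ s) = ⋃ t ∈ T, Set.pi Set.univ (Fset B s t) := by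
    intro s
    ext ω
    constructor
    · rintro ⟨hωA, hωs⟩
      obtain ⟨hmono, hbad, hmin⟩ := hidx ω hωA
      refine Set.mem_iUnion₂.mpr ⟨idx ω, Finset.mem_filter.mpr ⟨Finset.mem_univ _, hmono⟩, ?_⟩
      rw [mem_pi_Fset hmono.injective]
      refine ⟨fun j => ⟨?_, hbad j⟩, fun i hi hlt => ?_⟩
      · have hmem : S ω ∈ Set.pi Set.univ s := hωs
        have := hmem j (Set.mem_univ _)
        rwa [hSdef ω hωA j] at this
      · intro hωiB
        obtain ⟨j0, hj0⟩ := hlt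
        have hnr : i ∉ Set.range (idx ω) := by rintro ⟨j', hj'⟩; exact hi j' hj'
        exact absurd (hmin i hωiB hnr j0) (not_lt.mpr hj0.le)
    · intro h
      obtain ⟨t, htT, hω⟩ := Set.mem_iUnion₂.mp h
      have ht : StrictMono t := (Finset.mem_filter.mp htT).2
      obtain ⟨hωA, _, hωs⟩ := key s t ht ω hω
      exact ⟨hωA, fun j _ => hωs j⟩
  -- disjointness
  have hdisj : ∀ s : Fin k → Set (X × Fin m),
      Set.PairwiseDisjoint (↑T) (fun t : Fin k → Fin N => Set.pi Set.univ (Fset B s t)) := by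
    intro s t htT t' htT' hne
    refine Set.disjoint_left.mpr fun {ω} hω hω' => ?_
    have h1 := (key s t (Finset.mem_filter.mp htT).2 ω hω).2.1
    have h2 := (key s t' (Finset.mem_filter.mp htT').2 ω hω').2.1
    exact hne (h1.symm.trans h2)
  -- measure of a single piece
  have hper : ∀ (s : Fin k → Set (X × Fin m)) (t : Fin k → Fin N), t ∈ T →
      Pr (Set.pi Set.univ (Fset B s t)) =
        (∏ j, μ (s j ∩ B)) *
          ∏ i ∈ (Finset.image t Finset.univ)ᶜ, μ (Fset B (fun _ => Set.univ) t i) := by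
    intro s t htT
    have ht : StrictMono t := (Finset.mem_filter.mp htT).2
    rw [hPrdef, Measure.pi_pi,
      ← Finset.prod_mul_prod_compl (Finset.image t Finset.univ)
        (fun i => μ (Fset B s t i))]
    congr 1
    · rw [Finset.prod_image (fun x _ y _ h => ht.injective h)]
      exact Finset.prod_congr rfl fun j _ => by rw [Fset_apply B s ht.injective j]
    · refine Finset.prod_congr rfl fun i hi => ?_
      have h : ¬ ∃ j, t j = i := by simpa using hi
      rw [Fset_not_range B s h, Fset_not_range B _ h]
  -- measure of the whole event
  have hmeasure : ∀ s : Fin k → Set (X × Fin m), (∀ j, MeasurableSet (s j)) →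
      Pr (A ∩ S ⁻¹' (Set.pi Set.univ s)) =
        (∏ j, μ (s j ∩ B)) *
          ∑ t ∈ T, ∏ i ∈ (Finset.image t Finset.univ)ᶜ,
            μ (Fset B (fun _ => Set.univ) t i) := by
    intro s hs
    rw [hdecomp s, measure_biUnion_finset (hdisj s) (fun t _ =>
      MeasurableSet.univ_pi (fun i => measurableSet_Fset hBm hs t i)), Finset.mul_sum]
    exact Finset.sum_congr rfl fun t htT => hper s t htT
  set C : ENNReal := ∑ t ∈ T, ∏ i ∈ (Finset.image t Finset.univ)ᶜ,
      μ (Fset B (fun _ => Set.univ) t i) with hCdef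
  -- the measure of A itself
  have hAeq : Pr A = (μ B) ^ k * C := by
    have h := hmeasure (fun _ => Set.univ) (fun _ => MeasurableSet.univ)
    rw [Set.pi_univ, Set.preimage_univ, Set.inter_univ] at h
    rw [h]
    congr 1
    simp [Finset.prod_const, Finset.card_univ]
  have hAm : MeasurableSet A := by
    have h := hdecomp (fun _ => Set.univ)
    rw [Set.pi_univ, Set.preimage_univ, Set.inter_univ] at h
    rw [h]
    exact T.measurableSet_biUnion fun t _ =>
      MeasurableSet.univ_pi fun i =>
        measurableSet_Fset hBm (fun _ => MeasurableSet.univ) t i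
  have hμB : μ B ≠ 0 := hpos.ne'
  have hμBtop : μ B ≠ ⊤ := measure_ne_top μ B
  -- positivity of Pr A
  have hAne : Pr A ≠ 0 := by
    have hsub : Set.pi Set.univ (fun _ : Fin N => B) ⊆ A := by
      intro ω hω
      rw [hA]
      simp only [Set.mem_setOf_eq]
      have hfil : Finset.univ.filter (fun i => (ω i).2 ≠ l_p) = Finset.univ := by
        ext i
        simpa [hBdef] using hω i (Set.mem_univ _)
      rw [hfil, Finset.card_univ, Fintype.card_fin]
      exact hkN
    have hle : (μ B) ^ N ≤ Pr A := by
      calc (μ B) ^ N = Pr (Set.pi Set.univ fun _ : Fin N => B) := by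
            rw [hPrdef, Measure.pi_pi]; simp [Finset.prod_const, Finset.card_univ]
        _ ≤ Pr A := measure_mono hsub
    exact fun h0 => pow_ne_zero N hμB (le_antisymm (h0 ▸ hle) zero_le)
  have hC0 : C ≠ 0 := by
    intro h0
    rw [hAeq, h0, mul_zero] at hAne
    exact hAne rfl
  have hCtop : C ≠ ⊤ := by
    intro htop
    have : Pr A = ⊤ := by
      rw [hAeq, htop, ENNReal.mul_top (pow_ne_zero k hμB)]
    exact (measure_ne_top Pr A) this
  have hBk0 : (μ B) ^ k ≠ 0 := pow_ne_zero k hμB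
  have hBktop : (μ B) ^ k ≠ ⊤ := ENNReal.pow_ne_top hμBtop
  -- conclude via uniqueness of the product measure
  refine (Measure.pi_eq fun s hs => ?_).symm
  rw [Measure.map_apply hS (MeasurableSet.univ_pi hs), cond_apply hAm, hmeasure s hs, hAeq]
  have hrhs : ∀ j : Fin k, (μ[|B]) (s j) = (μ B)⁻¹ * μ (s j ∩ B) := by
    intro j
    rw [cond_apply hBm, Set.inter_comm]
  calc ((μ B) ^ k * C)⁻¹ * ((∏ j, μ (s j ∩ B)) * C)
      = ((μ B) ^ k)⁻¹ * (∏ j, μ (s j ∩ B)) * (C⁻¹ * C) := by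
        rw [ENNReal.mul_inv (Or.inl hBk0) (Or.inl hBktop)]; ring
    _ = ((μ B)⁻¹) ^ k * ∏ j, μ (s j ∩ B) := by
        rw [ENNReal.inv_mul_cancel hC0 hCtop, mul_one, ENNReal.inv_pow]
    _ = ∏ j : Fin k, (μ[|B]) (s j) := by
        rw [Finset.prod_congr rfl fun j _ => hrhs j, Finset.prod_mul_distrib,
          Finset.prod_const, Finset.card_univ, Fintype.card_fin]
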